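/- Let L be a finite-dimensional simple Lie algebra over a field F in which every maximal subalgebra is nil (every element of every maximal subalgebra is ad-nilpotent). Then every element of L is ad-nilpotent, and hence by Engel's theorem L is nilpotent, contradicting simplicity; therefore no such simple Lie algebra exists. -/

import Mathlib

/-- `M` is a maximal (proper) subalgebra of `L`. -/
def IsMaximalSubalgebra {F : Type*} [Field F] {L : Type*} [LieRing L] [LieAlgebra F L]
    (M : LieSubalgebra F L) : Prop :=
  M ≠ ⊤ ∧ ∀ K : LieSubalgebra F L, M < K → K = ⊤

/-- `C/D` is a chief factor of `L`: `D < C` are ideals of `L` and there is no ideal of `L`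
strictly between them (equivalently, `C/D` is a minimal nonzero ideal of `L/D`). -/
def IsChiefFactor {F : Type*} [Field F] {L : Type*} [LieRing L] [LieAlgebra F L]
    (D C : LieIdeal F L) : Prop :=
  D < C ∧ ∀ K : LieIdeal F L, D ≤ K → K ≤ C → K = D ∨ K = C

/-- The subquotient `S/(S ∩ D)`, as a Lie algebra; when `D ⊆ S` this is `S/D`. -/
abbrev SubQuot {F : Type*} [Field F] {L : Type*} [LieRing L] [LieAlgebra F L]
    (S : LieSubalgebra F L) (D : LieIdeal F L) :=
  S ⧸ LieIdeal.comap S.incl D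

/-- The core `M_L` of a subalgebra `M`: the largest ideal of `L` contained in `M`. -/
def coreOf {F : Type*} [Field F] {L : Type*} [LieRing L] [LieAlgebra F L]
    (M : LieSubalgebra F L) : LieIdeal F L :=
  sSup {I : LieIdeal F L | (I : Set L) ⊆ M}

/-- There is no finite-dimensional simple Lie algebra all of whose maximal subalgebras are
nil: such an algebra would have every element ad-nilpotent, hence be nilpotent by Engel's
theorem, contradicting simplicity. -/
theorem no_simple_with_all_maximals_nil {F : Type*} [Field F]
    {L : Type*} [LieRing L] [LieAlgebra F L] [FiniteDimensional F L]
    [LieAlgebra.IsSimple F L]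
    (h : ∀ M : LieSubalgebra F L, IsMaximalSubalgebra M →
      ∀ x ∈ M, IsNilpotent (LieAlgebra.ad F L x)) :
    False := by

  -- First: every element is ad-nilpotent.
  have key : ∀ x : L, IsNilpotent (LieAlgebra.ad F L x) := by
    intro x
    -- The span of x is a (abelian) Lie subalgebra.
    let A : LieSubalgebra F L :=
      { Submodule.span F {x} with
        lie_mem' := by
          intro y z hy hz
          have hy' : y ∈ Submodule.span F {x} := hy
          have hz' : z ∈ Submodule.span F {x} := hz
          rw [Submodule.mem_span_singleton] at hy' hz'
          obtain ⟨a, rfl⟩ := hy'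
          obtain ⟨b, rfl⟩ := hz'
          show ⁅a • x, b • x⁆ ∈ Submodule.span F {x}
          simp [Submodule.zero_mem] }
    -- A is proper, since L is non-abelian.
    have hA : A ≠ ⊤ := by
      intro htop
      apply LieAlgebra.IsSimple.non_abelian (R := F) (L := L)
      constructor
      intro y z
      have hy : y ∈ Submodule.span F {x} := by
        have : y ∈ A := htop ▸ LieSubalgebra.mem_top y
        exact this
      have hz : z ∈ Submodule.span F {x} := by
        have : z ∈ A := htop ▸ LieSubalgebra.mem_top z
        exact this
      rw [Submodule.mem_span_singleton] at hy hz
      obtain ⟨a, rfl⟩ := hy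
      obtain ⟨b, rfl⟩ := hz
      simp
    -- There is a maximal subalgebra containing A.
    let s : Set (LieSubalgebra F L) := {K | K ≠ ⊤ ∧ A ≤ K}
    have hs : s.Nonempty := ⟨A, hA, le_rfl⟩
    obtain ⟨M, hM, hmin⟩ :=
      (LieSubalgebra.wellFoundedGT_of_noetherian F L).wf.has_min s hs
    have hMmax : IsMaximalSubalgebra M := by
      refine ⟨hM.1, fun K hK => ?_⟩
      by_contra hKtop
      exact hmin K ⟨hKtop, hM.2.trans hK.le⟩ hK
    have hxA : x ∈ A := Submodule.mem_span_singleton_self x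
    exact h M hMmax x (hM.2 hxA)
  -- Engel's theorem: L is nilpotent.
  have hnil : LieRing.IsNilpotent L :=
    (LieAlgebra.isNilpotent_iff_forall (R := F) (L := L)).mpr key
  -- L is nontrivial since simple.
  have hnontriv : Nontrivial L := by
    rcases subsingleton_or_nontrivial L with hsub | hn
    · exact absurd ⟨fun y z => Subsingleton.elim _ _⟩
        (LieAlgebra.IsSimple.non_abelian (R := F) (L := L))
    · exact hn
  -- Nilpotent nontrivial Lie algebra has nontrivial center,
  -- but simple Lie algebras have trivial center.
  have h1 : Nontrivial (LieAlgebra.center F L) :=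
    LieAlgebra.non_trivial_center_of_isNilpotent (R := F) (L := L)
  have h2 : LieAlgebra.center F L = ⊥ :=
    LieAlgebra.center_eq_bot F L
  rw [h2] at h1
  obtain ⟨⟨a, ha⟩, ⟨b, hb⟩, hab⟩ := h1
  rw [LieSubmodule.mem_bot] at ha hb
  exact hab (by subst ha; subst hb; rfl)
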